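/- Let p be a probability distribution on [k] with p_i ≤ 1/2 for all i, and let X₁,…,X_{2k} be i.i.d. samples from p. Define, for each i ∈ [k], the event E_i that X_{2i-1} = i, X_{2j-1} ≠ j for all j ≠ i, and X_{2i} ≠ i. Then P(E_i) = p_i · ∏_{j=1}^k (1 - p_j) for every i ∈ [k]; in particular, conditioned on the union ⋃_i E_i occurring (these events are disjoint), the index i of the occurring event is distributed according to p. -/

import Mathlib

open MeasureTheory ProbabilityTheory

/-- The event that, among the pairs of players, exactly the pair `i` fires:
the first player of pair `i` observes `i`, the first player of every other pair `j`
does not observe `j`, and the second player of pair `i` does not observe `i`. -/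
def simEvent {Ω : Type*} {k : ℕ} (X : Fin k × Fin 2 → Ω → Fin k) (i : Fin k) :
    Set Ω :=
  {ω | X (i, 0) ω = i ∧ (∀ j : Fin k, j ≠ i → X (j, 0) ω ≠ j) ∧ X (i, 1) ω ≠ i}

theorem basic_simulation_correctness {Ω : Type*} [MeasurableSpace Ω]
    (μ : Measure Ω) [IsProbabilityMeasure μ]
    (k : ℕ) (hk : 0 < k) (p : Fin k → ℝ)
    (hp0 : ∀ i, 0 ≤ p i) (hp1 : ∑ i, p i = 1) (hphalf : ∀ i, p i ≤ 1 / 2)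
    (X : Fin k × Fin 2 → Ω → Fin k) (hmeas : ∀ n, Measurable (X n))
    (hindep : iIndepFun X μ)
    (hlaw : ∀ n i, (μ {ω | X n ω = i}).toReal = p i) :
    (∀ i : Fin k, (μ (simEvent X i)).toReal = p i * ∏ j, (1 - p j)) ∧
    (∀ i : Fin k,
      (μ (simEvent X i)).toReal / (μ (⋃ j : Fin k, simEvent X j)).toReal = p i) := by
  -- basic probability facts
  have hsingle : ∀ (n : Fin k × Fin 2) (j : Fin k),
      (μ (X n ⁻¹' {j})).toReal = p j := by
    intro n j
    have : X n ⁻¹' {j} = {ω | X n ω = j} := by ext ω; simp [Set.mem_preimage]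
    rw [this]; exact hlaw n j
  have hcompl : ∀ (n : Fin k × Fin 2) (j : Fin k),
      (μ ((X n ⁻¹' {j})ᶜ)).toReal = 1 - p j := by
    intro n j
    have hms : MeasurableSet (X n ⁻¹' {j}) := (hmeas n) (measurableSet_singleton j)
    rw [prob_compl_eq_one_sub hms,
      ENNReal.toReal_sub_of_le prob_le_one ENNReal.one_ne_top,
      ENNReal.toReal_one, hsingle]
  -- part 1
  have part1 : ∀ i : Fin k, (μ (simEvent X i)).toReal = p i * ∏ j, (1 - p j) := by
    intro i
    classical
    set B : Fin k × Fin 2 → Set (Fin k) := fun n =>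
      if n.2 = 0 then (if n.1 = i then ({i} : Set (Fin k)) else {n.1}ᶜ) else {i}ᶜ with hB
    set S : Finset (Fin k × Fin 2) :=
      Finset.univ.image (fun j : Fin k => (j, (0 : Fin 2))) ∪ {(i, 1)} with hS
    have hE : simEvent X i = ⋂ n ∈ S, X n ⁻¹' (B n) := by
      ext ω
      simp only [simEvent, Set.mem_setOf_eq, Set.mem_iInter, hS, Finset.mem_union,
        Finset.mem_image, Finset.mem_univ, true_and, Finset.mem_singleton]
      constructor
      · rintro ⟨h1, h2, h3⟩ n hn
        rcases hn with ⟨j, rfl⟩ | rfl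
        · by_cases hji : j = i
          · subst hji; simp [hB, h1]
          · simp [hB, hji, h2 j hji]
        · simp [hB, h3]
      · intro h
        refine ⟨?_, ?_, ?_⟩
        · have := h (i, 0) (Or.inl ⟨i, rfl⟩)
          simpa [hB] using this
        · intro j hji
          have := h (j, 0) (Or.inl ⟨j, rfl⟩)
          simpa [hB, hji] using this
        · have := h (i, 1) (Or.inr rfl)
          simpa [hB] using this
    have hmB : ∀ n ∈ S, MeasurableSet (B n) := by
      intro n _
      simp only [hB]
      split_ifs
      · exact measurableSet_singleton _
      · exact (measurableSet_singleton _).compl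
      · exact (measurableSet_singleton _).compl
    have hprod : μ (simEvent X i) = ∏ n ∈ S, μ (X n ⁻¹' (B n)) := by
      rw [hE]
      exact hindep.meas_biInter (fun n hn => ⟨B n, hmB n hn, rfl⟩)
    have hfin : ∀ n ∈ S, μ (X n ⁻¹' (B n)) ≠ ⊤ := fun n _ => measure_ne_top μ _
    have hdisjS : Disjoint (Finset.univ.image (fun j : Fin k => (j, (0 : Fin 2))))
        ({(i, (1 : Fin 2))} : Finset (Fin k × Fin 2)) := by
      simp [Finset.disjoint_singleton_right]
    have hinj : ∀ a ∈ (Finset.univ : Finset (Fin k)), ∀ b ∈ (Finset.univ : Finset (Fin k)),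
        (fun j : Fin k => (j, (0 : Fin 2))) a = (fun j : Fin k => (j, (0 : Fin 2))) b → a = b := by
      intro a _ b _ hab
      exact ((Prod.mk.injEq _ _ _ _).mp hab).1
    calc (μ (simEvent X i)).toReal
        = ∏ n ∈ S, (μ (X n ⁻¹' (B n))).toReal := by
          rw [hprod, ENNReal.toReal_prod]
      _ = (∏ j : Fin k, (μ (X (j, 0) ⁻¹' (B (j, 0)))).toReal)
            * (μ (X (i, 1) ⁻¹' (B (i, 1)))).toReal := by
          rw [hS, Finset.prod_union hdisjS, Finset.prod_image hinj,
            Finset.prod_singleton]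
      _ = (∏ j : Fin k, (if j = i then p i else 1 - p j)) * (1 - p i) := by
          congr 1
          · apply Finset.prod_congr rfl
            intro j _
            by_cases hji : j = i
            · subst hji; simp [hB, hsingle]
            · simp [hB, hji, hcompl]
          · simp [hB, hcompl]
      _ = p i * ∏ j, (1 - p j) := by
          have h1 : (∏ j : Fin k, (if j = i then p i else 1 - p j))
              = p i * ∏ j ∈ Finset.univ.erase i, (1 - p j) := by
            rw [← Finset.mul_prod_erase Finset.univ _ (Finset.mem_univ i)]
            simp only [if_pos rfl]
            congr 1
            exact Finset.prod_congr rfl (fun j hj => if_neg (Finset.mem_erase.mp hj).1)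
          rw [h1, ← Finset.mul_prod_erase Finset.univ (fun j => 1 - p j) (Finset.mem_univ i)]
          ring
  -- positivity of the product
  have hCpos : 0 < ∏ j, (1 - p j) := by
    apply Finset.prod_pos
    intro j _
    have := hphalf j
    linarith
  -- disjointness
  have hdisj : Pairwise (Function.onFun Disjoint (simEvent X)) := by
    intro a b hab
    rw [Function.onFun, Set.disjoint_left]
    intro ω ha hb
    exact hb.2.1 a hab ha.1
  have hmeasE : ∀ j : Fin k, MeasurableSet (simEvent X j) := by
    intro j
    have h1 : MeasurableSet {ω | X (j, 0) ω = j} :=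
      (hmeas (j, 0)) (measurableSet_singleton j)
    have h2 : MeasurableSet {ω | ∀ j' : Fin k, j' ≠ j → X (j', 0) ω ≠ j'} := by
      have : {ω | ∀ j' : Fin k, j' ≠ j → X (j', 0) ω ≠ j'}
          = ⋂ j' : Fin k, ⋂ (_ : j' ≠ j), {ω | X (j', 0) ω = j'}ᶜ := by
        ext ω; simp
      rw [this]
      exact MeasurableSet.iInter fun j' => MeasurableSet.iInter fun _ =>
        ((hmeas (j', 0)) (measurableSet_singleton j')).compl
    have h3 : MeasurableSet {ω | X (j, 1) ω ≠ j} :=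
      ((hmeas (j, 1)) (measurableSet_singleton j)).compl
    have : simEvent X j = {ω | X (j, 0) ω = j}
        ∩ ({ω | ∀ j' : Fin k, j' ≠ j → X (j', 0) ω ≠ j'} ∩ {ω | X (j, 1) ω ≠ j}) := by
      ext ω; simp only [simEvent, Set.mem_setOf_eq, Set.mem_inter_iff]
    rw [this]
    exact h1.inter (h2.inter h3)
  have hunion : (μ (⋃ j : Fin k, simEvent X j)).toReal = ∏ j, (1 - p j) := by
    rw [measure_iUnion hdisj hmeasE, tsum_fintype,
      ENNReal.toReal_sum (fun j _ => measure_ne_top μ _)]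
    have : ∀ j : Fin k, (μ (simEvent X j)).toReal = p j * ∏ l, (1 - p l) := part1
    rw [Finset.sum_congr rfl (fun j _ => this j), ← Finset.sum_mul, hp1, one_mul]
  refine ⟨part1, fun i => ?_⟩
  rw [part1 i, hunion, mul_div_assoc, div_self (ne_of_gt hCpos), mul_one]
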